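/- arXiv:1503.02771 — 5 statements merged into one kernel-verified Lean document; each statement's English description precedes it below -/
import Mathlib

section
/- Fix a > 0 and define A(λ) = 2πa/λ + (π/λ²)·sinh(2λa) for λ > 0. The equation A'(λ) = 0 has a unique solution λ₀ > 0, and A attains its global minimum on (0,∞) at λ₀. -/
open Real

noncomputable def ff (t : ℝ) : ℝ := t * Real.cosh t - 2 * Real.sinh t - t
noncomputable def gg (t : ℝ) : ℝ := t * Real.sinh t - Real.cosh t - 1

lemma ff_cont : Continuous ff := by unfold ff; continuity
lemma gg_cont : Continuous gg := by unfold gg; continuity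

lemma hasDerivAt_ff (t : ℝ) : HasDerivAt ff (gg t) t := by
  have h1 : HasDerivAt (fun t : ℝ => t * Real.cosh t) (1 * Real.cosh t + t * Real.sinh t) t :=
    (hasDerivAt_id t).mul (Real.hasDerivAt_cosh t)
  have h2 : HasDerivAt (fun t : ℝ => 2 * Real.sinh t) (2 * Real.cosh t) t :=
    (Real.hasDerivAt_sinh t).const_mul 2
  have h3 := (h1.sub h2).sub (hasDerivAt_id t)
  refine h3.congr_deriv ?_
  unfold gg; ring

lemma hasDerivAt_gg (t : ℝ) : HasDerivAt gg (t * Real.cosh t) t := by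
  have h1 : HasDerivAt (fun t : ℝ => t * Real.sinh t) (1 * Real.sinh t + t * Real.cosh t) t :=
    (hasDerivAt_id t).mul (Real.hasDerivAt_sinh t)
  have h3 := (h1.sub (Real.hasDerivAt_cosh t)).sub (hasDerivAt_const t 1)
  refine h3.congr_deriv ?_
  ring

lemma gg_zero : gg 0 = -2 := by norm_num [gg]
lemma ff_zero : ff 0 = 0 := by simp [ff]

lemma exp_two_gt : (7 : ℝ) < Real.exp 2 := by
  have h := Real.exp_one_gt_d9
  have : Real.exp 2 = Real.exp 1 * Real.exp 1 := by
    rw [← Real.exp_add]; norm_num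
  nlinarith

lemma gg_two_pos : 0 < gg 2 := by
  have h2 := exp_two_gt
  have hn : Real.exp (-2) * Real.exp 2 = 1 := by
    rw [← Real.exp_add]; norm_num
  have hp : 0 < Real.exp (-2) := Real.exp_pos _
  unfold gg
  rw [Real.sinh_eq, Real.cosh_eq]
  nlinarith

lemma ff_four_pos : 0 < ff 4 := by
  have h2 := exp_two_gt
  have h4 : Real.exp 4 = Real.exp 2 * Real.exp 2 := by
    rw [← Real.exp_add]; norm_num
  have hp : 0 < Real.exp (-4) := Real.exp_pos _
  unfold ff
  rw [Real.sinh_eq, Real.cosh_eq]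
  nlinarith

lemma gg_mono : StrictMonoOn gg (Set.Ici 0) := by
  apply strictMonoOn_of_deriv_pos (convex_Ici 0) gg_cont.continuousOn
  intro x hx
  rw [interior_Ici] at hx
  rw [(hasDerivAt_gg x).deriv]
  exact mul_pos hx (Real.cosh_pos x)

lemma ff_root : ∃ t₀ : ℝ, 0 < t₀ ∧ ff t₀ = 0 ∧ (∀ t, 0 < t → ff t = 0 → t = t₀) ∧
    (∀ t, 0 < t → t < t₀ → ff t < 0) ∧ (∀ t, t₀ < t → 0 < ff t) := by
  -- root c of gg
  have hIVT := intermediate_value_Ioo (by norm_num : (0:ℝ) ≤ 2) gg_cont.continuousOn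
  have h0 : (0:ℝ) ∈ Set.Ioo (gg 0) (gg 2) := by
    rw [gg_zero]; exact ⟨by norm_num, gg_two_pos⟩
  obtain ⟨c, hcmem, hgc⟩ := hIVT h0
  obtain ⟨hc0, hc2⟩ := hcmem
  -- sign of gg
  have hg_neg : ∀ t, 0 ≤ t → t < c → gg t < 0 := fun t ht htc => by
    have := gg_mono ht hc0.le htc
    linarith [hgc]
  have hg_pos : ∀ t, c < t → 0 < gg t := fun t htc => by
    have := gg_mono hc0.le (le_trans hc0.le htc.le) htc
    linarith [hgc]
  -- ff strictly decreasing then increasing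
  have hanti : StrictAntiOn ff (Set.Icc 0 c) := by
    apply strictAntiOn_of_deriv_neg (convex_Icc 0 c) ff_cont.continuousOn
    intro x hx
    rw [interior_Icc] at hx
    rw [(hasDerivAt_ff x).deriv]
    exact hg_neg x hx.1.le hx.2
  have hmono : StrictMonoOn ff (Set.Ici c) := by
    apply strictMonoOn_of_deriv_pos (convex_Ici c) ff_cont.continuousOn
    intro x hx
    rw [interior_Ici] at hx
    rw [(hasDerivAt_ff x).deriv]
    exact hg_pos x hx
  have hffc : ff c < 0 := by
    have := hanti (Set.left_mem_Icc.mpr hc0.le) (Set.right_mem_Icc.mpr hc0.le) hc0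
    rwa [ff_zero] at this
  -- root of ff on [c,4]
  have hc4 : c ≤ 4 := by linarith
  have hIVT2 := intermediate_value_Ioo hc4 ff_cont.continuousOn
  have h0' : (0:ℝ) ∈ Set.Ioo (ff c) (ff 4) := ⟨hffc, ff_four_pos⟩
  obtain ⟨t₀, ht₀mem, hft₀⟩ := hIVT2 h0'
  obtain ⟨hct₀, _⟩ := ht₀mem
  have ht₀pos : 0 < t₀ := lt_trans hc0 hct₀
  have hneg : ∀ t, 0 < t → t < t₀ → ff t < 0 := by
    intro t ht htlt
    rcases le_or_gt t c with h | h
    · have := hanti (Set.left_mem_Icc.mpr hc0.le) ⟨ht.le, h⟩ ht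
      rwa [ff_zero] at this
    · have := hmono h.le hct₀.le htlt
      linarith [hft₀]
  have hpos : ∀ t, t₀ < t → 0 < ff t := by
    intro t ht
    have := hmono hct₀.le (le_trans hct₀.le ht.le) ht
    linarith [hft₀]
  refine ⟨t₀, ht₀pos, hft₀, ?_, hneg, hpos⟩
  intro t ht hfz
  rcases lt_trichotomy t t₀ with h | h | h
  · exact absurd hfz (by have := hneg t ht h; linarith)
  · exact h
  · exact absurd hfz (by have := hpos t h; linarith)

lemma hasDerivAt_A (a lam : ℝ) (hlam : lam ≠ 0) :
    HasDerivAt (fun x : ℝ => 2 * π * a / x + (π / x ^ 2) * Real.sinh (2 * x * a))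
      (-(2 * π * a) / lam ^ 2 - (2 * π / lam ^ 3) * Real.sinh (2 * lam * a)
        + (2 * π * a / lam ^ 2) * Real.cosh (2 * lam * a)) lam := by
  have h1 : HasDerivAt (fun x : ℝ => 2 * π * a / x)
      ((0 * lam - 2 * π * a * 1) / lam ^ 2) lam :=
    (hasDerivAt_const lam (2 * π * a)).div (hasDerivAt_id lam) hlam
  have h2 : HasDerivAt (fun x : ℝ => π / x ^ 2)
      ((0 * lam ^ 2 - π * (2 * lam ^ 1)) / (lam ^ 2) ^ 2) lam :=
    (hasDerivAt_const lam π).div (hasDerivAt_pow 2 lam) (pow_ne_zero 2 hlam)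
  have hin : HasDerivAt (fun x : ℝ => 2 * x * a) (2 * a) lam := by
    simpa using ((hasDerivAt_id lam).const_mul 2).mul_const a
  have hs : HasDerivAt (fun x : ℝ => Real.sinh (2 * x * a))
      (Real.cosh (2 * lam * a) * (2 * a)) lam :=
    hin.sinh
  have h := h1.add (h2.mul hs)
  refine h.congr_deriv ?_
  field_simp
  ring

lemma deriv_eq_ff (a lam : ℝ) (hlam : lam ≠ 0) :
    -(2 * π * a) / lam ^ 2 - (2 * π / lam ^ 3) * Real.sinh (2 * lam * a)
      + (2 * π * a / lam ^ 2) * Real.cosh (2 * lam * a)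
    = (π / lam ^ 3) * ff (2 * lam * a) := by
  unfold ff
  field_simp
  ring

/-- A'(λ) = 0 has a unique positive solution λ₀, at which A attains its global
minimum on (0,∞), where A(λ) = 2πa/λ + (π/λ²)·sinh(2λa). -/
theorem catenoid_area_unique_min (a : ℝ) (ha : 0 < a) :
    ∃ lam₀ : ℝ, 0 < lam₀ ∧
      (-(2 * π * a) / lam₀ ^ 2 - (2 * π / lam₀ ^ 3) * Real.sinh (2 * lam₀ * a)
        + (2 * π * a / lam₀ ^ 2) * Real.cosh (2 * lam₀ * a) = 0) ∧
      (∀ lam : ℝ, 0 < lam →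
        (-(2 * π * a) / lam ^ 2 - (2 * π / lam ^ 3) * Real.sinh (2 * lam * a)
          + (2 * π * a / lam ^ 2) * Real.cosh (2 * lam * a) = 0) → lam = lam₀) ∧
      (∀ lam : ℝ, 0 < lam →
        2 * π * a / lam₀ + (π / lam₀ ^ 2) * Real.sinh (2 * lam₀ * a)
          ≤ 2 * π * a / lam + (π / lam ^ 2) * Real.sinh (2 * lam * a)) := by
  obtain ⟨t₀, ht₀pos, hft₀, huniq, hneg, hpos⟩ := ff_root
  set lam₀ : ℝ := t₀ / (2 * a) with hlam₀def
  have hlam₀pos : 0 < lam₀ := div_pos ht₀pos (by linarith)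
  have hkey : 2 * lam₀ * a = t₀ := by
    rw [hlam₀def]; field_simp
  refine ⟨lam₀, hlam₀pos, ?_, ?_, ?_⟩
  · rw [deriv_eq_ff a lam₀ hlam₀pos.ne', hkey, hft₀, mul_zero]
  · intro lam hlam heq
    rw [deriv_eq_ff a lam hlam.ne'] at heq
    have hπ : π / lam ^ 3 ≠ 0 := by positivity
    have hfz : ff (2 * lam * a) = 0 := by
      rcases mul_eq_zero.mp heq with h | h
      · exact absurd h hπ
      · exact h
    have h2la : 2 * lam * a = t₀ := huniq _ (by positivity) hfz
    rw [hlam₀def]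
    field_simp
    linarith
  · set A : ℝ → ℝ := fun x => 2 * π * a / x + (π / x ^ 2) * Real.sinh (2 * x * a) with hAdef
    have hanti : AntitoneOn A (Set.Ioc 0 lam₀) := by
      apply antitoneOn_of_deriv_nonpos (convex_Ioc 0 lam₀)
      · exact fun x hx => (hasDerivAt_A a x hx.1.ne').continuousAt.continuousWithinAt
      · rw [interior_Ioc]
        exact fun x hx => (hasDerivAt_A a x hx.1.ne').differentiableAt.differentiableWithinAt
      · rw [interior_Ioc]
        intro x hx
        rw [(hasDerivAt_A a x hx.1.ne').deriv, deriv_eq_ff a x hx.1.ne']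
        have hff : ff (2 * x * a) < 0 := by
          apply hneg _ (by nlinarith [hx.1, ha])
          rw [← hkey]
          nlinarith [hx.1, hx.2]
        exact mul_nonpos_of_nonneg_of_nonpos (le_of_lt (div_pos Real.pi_pos (pow_pos hx.1 3))) hff.le
    have hmono : MonotoneOn A (Set.Ici lam₀) := by
      apply monotoneOn_of_deriv_nonneg (convex_Ici lam₀)
      · exact fun x hx => (hasDerivAt_A a x (lt_of_lt_of_le hlam₀pos hx).ne').continuousAt.continuousWithinAt
      · rw [interior_Ici]
        exact fun x hx => (hasDerivAt_A a x (lt_trans hlam₀pos hx).ne').differentiableAt.differentiableWithinAt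
      · rw [interior_Ici]
        intro x hx
        have hxpos : 0 < x := lt_trans hlam₀pos hx
        rw [(hasDerivAt_A a x hxpos.ne').deriv, deriv_eq_ff a x hxpos.ne']
        have hxl : lam₀ < x := hx
        have hff : 0 < ff (2 * x * a) := by
          apply hpos
          rw [← hkey]
          nlinarith
        exact mul_nonneg (by positivity) hff.le
    intro lam hlam
    rcases le_total lam lam₀ with h | h
    · exact hanti ⟨hlam, h⟩ ⟨hlam₀pos, le_rfl⟩ h
    · exact hmono (Set.self_mem_Ici) h h
end

section
/- Let β > 0 satisfy tanh(β) = 1/β and let a > 0. Then the minimum over all λ > 0 of the area 2πa/λ + (π/λ²)·sinh(2λa) equals (2πa²/β)·(1 + sinh(2β)/(2β)) and is attained exactly at λ = β/a. -/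
open Real

private lemma p_strictMono : StrictMonoOn (fun t : ℝ => t * Real.sinh t - Real.cosh t) (Set.Ici 0) := by
  apply strictMonoOn_of_deriv_pos (convex_Ici 0)
  · fun_prop
  · intro t ht
    rw [interior_Ici] at ht
    have hd : HasDerivAt (fun t : ℝ => t * Real.sinh t - Real.cosh t) (t * Real.cosh t) t := by
      have h1 := (hasDerivAt_id t).mul (Real.hasDerivAt_sinh t)
      have h2 := Real.hasDerivAt_sinh t
      have := h1.sub (Real.hasDerivAt_cosh t)
      exact this.congr_deriv (by simp)
    rw [hd.deriv]
    have ht' : (0:ℝ) < t := ht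
    exact mul_pos ht' (Real.cosh_pos t)

private lemma f_hasDeriv (t : ℝ) (ht : 0 < t) :
    HasDerivAt (fun s : ℝ => 2 / s + Real.sinh (2 * s) / s ^ 2)
      (4 * Real.sinh t * (t * Real.sinh t - Real.cosh t) / t ^ 3) t := by
  have ht' : t ≠ 0 := ht.ne'
  have h1 : HasDerivAt (fun s : ℝ => 2 / s) (-2 / t ^ 2) t := by
    have := (hasDerivAt_const t (2:ℝ)).div (hasDerivAt_id t) ht'
    refine this.congr_deriv ?_
    simp
  have hu : HasDerivAt (fun s : ℝ => Real.sinh (2 * s)) (2 * Real.cosh (2 * t)) t := by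
    have := (Real.hasDerivAt_sinh (2 * t)).comp t ((hasDerivAt_id t).const_mul 2)
    refine this.congr_deriv ?_
    ring
  have hv : HasDerivAt (fun s : ℝ => s ^ 2) (2 * t) t := by
    simpa using hasDerivAt_pow 2 t
  have h2 := hu.div hv (by positivity)
  have := h1.add h2
  refine this.congr_deriv ?_
  rw [Real.cosh_two_mul, Real.sinh_two_mul, Real.cosh_sq]
  field_simp
  ring

private lemma f_min (β : ℝ) (hβ : 0 < β) (hp : β * Real.sinh β - Real.cosh β = 0) :
    ∀ t : ℝ, 0 < t → t ≠ β →
      2 / β + Real.sinh (2 * β) / β ^ 2 < 2 / t + Real.sinh (2 * t) / t ^ 2 := by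
  set f := fun s : ℝ => 2 / s + Real.sinh (2 * s) / s ^ 2 with hf
  have hcont : ∀ D : Set ℝ, (∀ x ∈ D, x ≠ 0) → ContinuousOn f D := by
    intro D hD
    apply ContinuousOn.add
    · exact continuousOn_const.div continuousOn_id (by intro x hx; exact hD x hx)
    · exact (Real.continuous_sinh.comp (continuous_const.mul continuous_id)).continuousOn.div
        (continuous_pow 2).continuousOn (by intro x hx; exact pow_ne_zero 2 (hD x hx))
  have hanti : StrictAntiOn f (Set.Ioc 0 β) := by
    apply strictAntiOn_of_deriv_neg (convex_Ioc 0 β)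
    · exact hcont _ (fun x hx => hx.1.ne')
    · intro t ht
      rw [interior_Ioc] at ht
      have ht0 : 0 < t := ht.1
      rw [(f_hasDeriv t ht0).deriv]
      have hpt : t * Real.sinh t - Real.cosh t < 0 := by
        have := p_strictMono (Set.mem_Ici.2 ht.1.le) (Set.mem_Ici.2 hβ.le) ht.2
        simpa [hp] using this
      have hs : 0 < Real.sinh t := by positivity
      exact div_neg_of_neg_of_pos (by nlinarith) (by positivity)
  have hmono : StrictMonoOn f (Set.Ici β) := by
    apply strictMonoOn_of_deriv_pos (convex_Ici β)
    · exact hcont _ (fun x hx => (hβ.trans_le hx).ne')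
    · intro t ht
      rw [interior_Ici] at ht
      have htpos : 0 < t := hβ.trans ht
      rw [(f_hasDeriv t htpos).deriv]
      have hpt : 0 < t * Real.sinh t - Real.cosh t := by
        have := p_strictMono (Set.mem_Ici.2 hβ.le) (Set.mem_Ici.2 htpos.le) ht
        simpa [hp] using this
      have hs : 0 < Real.sinh t := by positivity
      exact div_pos (by nlinarith) (by positivity)
  intro t ht htβ
  rcases lt_or_gt_of_ne htβ with h | h
  · exact hanti (Set.mem_Ioc.2 ⟨ht, h.le⟩) (Set.mem_Ioc.2 ⟨hβ, le_refl β⟩) h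
  · exact hmono (Set.mem_Ici.2 (le_refl β)) (Set.mem_Ici.2 h.le) h

/-- The minimum over λ > 0 of A(λ) = 2πa/λ + (π/λ²)·sinh(2λa) equals
(2πa²/β)(1 + sinh(2β)/(2β)) and is attained exactly at λ = β/a. -/
theorem catenoid_area_min_value (β a : ℝ) (hβ : 0 < β) (htanh : Real.tanh β = 1 / β)
    (ha : 0 < a) :
    (2 * π * a / (β / a) + (π / (β / a) ^ 2) * Real.sinh (2 * (β / a) * a)
      = (2 * π * a ^ 2 / β) * (1 + Real.sinh (2 * β) / (2 * β))) ∧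
    (∀ lam : ℝ, 0 < lam →
      (2 * π * a ^ 2 / β) * (1 + Real.sinh (2 * β) / (2 * β))
        ≤ 2 * π * a / lam + (π / lam ^ 2) * Real.sinh (2 * lam * a)) ∧
    (∀ lam : ℝ, 0 < lam →
      2 * π * a / lam + (π / lam ^ 2) * Real.sinh (2 * lam * a)
        = (2 * π * a ^ 2 / β) * (1 + Real.sinh (2 * β) / (2 * β)) → lam = β / a) := by
  have ha' : a ≠ 0 := ha.ne'
  have hβ' : β ≠ 0 := hβ.ne'
  have hπ : 0 < π := Real.pi_pos
  have hcosh : 0 < Real.cosh β := Real.cosh_pos β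
  have hp : β * Real.sinh β - Real.cosh β = 0 := by
    rw [Real.tanh_eq_sinh_div_cosh] at htanh
    field_simp at htanh
    linarith
  have harg : 2 * (β / a) * a = 2 * β := by field_simp
  -- value identity
  have hval : (2 * π * a ^ 2 / β) * (1 + Real.sinh (2 * β) / (2 * β))
      = π * a ^ 2 * (2 / β + Real.sinh (2 * β) / β ^ 2) := by
    field_simp
  -- A(lam) = π a² f(lam * a)
  have hA : ∀ lam : ℝ, 0 < lam →
      2 * π * a / lam + (π / lam ^ 2) * Real.sinh (2 * lam * a)
        = π * a ^ 2 * (2 / (lam * a) + Real.sinh (2 * (lam * a)) / (lam * a) ^ 2) := by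
    intro lam hlam
    have hlam' : lam ≠ 0 := hlam.ne'
    rw [show 2 * (lam * a) = 2 * lam * a by ring]
    field_simp
  refine ⟨?_, ?_, ?_⟩
  · rw [harg, hval]
    have hba : (0:ℝ) < β / a := div_pos hβ ha
    field_simp
  · intro lam hlam
    rw [hA lam hlam, hval]
    have hta : 0 < lam * a := mul_pos hlam ha
    rcases eq_or_ne (lam * a) β with h | h
    · rw [h]
    · have := f_min β hβ hp (lam * a) hta h
      have hπa : 0 < π * a ^ 2 := by positivity
      exact (mul_lt_mul_of_pos_left this hπa).le
  · intro lam hlam heq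
    rw [hA lam hlam, hval] at heq
    have hta : 0 < lam * a := mul_pos hlam ha
    by_contra hne
    have h : lam * a ≠ β := by
      intro hcon
      apply hne
      field_simp [← hcon]
      exact hcon
    have := f_min β hβ hp (lam * a) hta h
    have hπa : 0 < π * a ^ 2 := by positivity
    linarith [mul_lt_mul_of_pos_left this hπa]
end

section
/- For the catenoid C = {(x,y,z) ∈ ℝ³ : cosh z = √(x²+y²)}, the truncated piece C ∩ {-β ≤ z ≤ β} with tanh β = 1/β has the property that the rays from the origin are tangent to C along the boundary circles z = ±β. -/
open Real

/-- For the catenoid parametrized by X(θ,z) = (cosh z cos θ, cosh z sin θ, z),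
if tanh β = 1/β with β > 0, then at every boundary point p with z = ±β the
position vector p lies in the tangent plane, i.e. p is a linear combination of
the coordinate tangent vectors X_θ and X_z. -/
theorem rays_tangent_to_catenoid (β : ℝ) (hβ : 0 < β) (htanh : Real.tanh β = 1 / β) :
    ∀ θ : ℝ, ∀ ε : ℝ, ε = 1 ∨ ε = -1 →
      ∃ s t : ℝ,
        (Real.cosh (ε * β) * Real.cos θ, Real.cosh (ε * β) * Real.sin θ, ε * β)
          = s • (-(Real.cosh (ε * β) * Real.sin θ), Real.cosh (ε * β) * Real.cos θ, (0 : ℝ))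
            + t • (Real.sinh (ε * β) * Real.cos θ, Real.sinh (ε * β) * Real.sin θ, (1 : ℝ)) := by
  have hkey : β * Real.sinh β = Real.cosh β := by
    have hc : Real.cosh β ≠ 0 := (Real.cosh_pos β).ne'
    rw [Real.tanh_eq_sinh_div_cosh] at htanh
    field_simp at htanh
    linarith
  intro θ ε hε
  refine ⟨0, ε * β, ?_⟩
  have hεβ : ε * β * Real.sinh (ε * β) = Real.cosh (ε * β) := by
    rcases hε with h | h <;> subst h <;>
      simp [Real.sinh_neg, Real.cosh_neg] <;> nlinarith [hkey]
  simp only [Prod.mk_add_mk, Prod.smul_mk, smul_eq_mul, Prod.mk.injEq]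
  refine ⟨by linear_combination (-Real.cos θ) * hεβ, by linear_combination (-Real.sin θ) * hεβ, by ring⟩
end

section
/- Fix f > 0, a > 0. For any increasing function h : [-a,a] → ℝ satisfying h(u₂) - h(u₁) ≥ (2π/f)(u₂-u₁) for u₁ ≤ u₂, we have ∫_{-a}^{a} f·cosh²(h(u)) du ≥ ∫_{-a}^{a} f·cosh²((2π/f)u) du. -/
open Real Set MeasureTheory

lemma cosh_tangent_line (x y : ℝ) : Real.cosh y + Real.sinh y * (x - y) ≤ Real.cosh x := by
  have h1 := Real.add_one_le_exp (x - y)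
  have h2 := Real.add_one_le_exp (y - x)
  have e1 : Real.exp x = Real.exp y * Real.exp (x - y) := by rw [← Real.exp_add]; ring_nf
  have e2 : Real.exp (-x) = Real.exp (-y) * Real.exp (y - x) := by rw [← Real.exp_add]; ring_nf
  have p1 := Real.exp_pos y
  have p2 := Real.exp_pos (-y)
  rw [Real.cosh_eq, Real.cosh_eq, Real.sinh_eq, e1, e2]
  nlinarith [mul_le_mul_of_nonneg_left h1 p1.le, mul_le_mul_of_nonneg_left h2 p2.le]

/-- For any increasing h on [-a,a] with slope at least 2π/f,
∫_{-a}^{a} f·cosh²(h(u)) du ≥ ∫_{-a}^{a} f·cosh²((2π/f)u) du. -/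
theorem area_ge_catenoid (f a : ℝ) (hf : 0 < f) (ha : 0 < a) (h : ℝ → ℝ)
    (hslope : ∀ u₁ u₂, u₁ ∈ Icc (-a) a → u₂ ∈ Icc (-a) a → u₁ ≤ u₂ →
      (2 * π / f) * (u₂ - u₁) ≤ h u₂ - h u₁) :
    (∫ u in (-a)..a, f * Real.cosh ((2 * π / f) * u) ^ 2)
      ≤ ∫ u in (-a)..a, f * Real.cosh (h u) ^ 2 := by
  set k := 2 * π / f with hk_def
  have hk : 0 < k := div_pos (by positivity) hf
  -- clamp to [-a,a]
  set c : ℝ → ℝ := fun u => max (-a) (min a u) with hc_def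
  have hc_mem : ∀ u, c u ∈ Icc (-a) a :=
    fun u => ⟨le_max_left _ _, max_le (by linarith) (min_le_left _ _)⟩
  have hc_id : ∀ u ∈ Icc (-a) a, c u = u := by
    intro u hu
    simp only [hc_def]
    rw [min_eq_right hu.2, max_eq_right hu.1]
  have hc_mono : Monotone c := fun u v huv => max_le_max le_rfl (min_le_min le_rfl huv)
  set H : ℝ → ℝ := fun u => h (c u) with hH_def
  have hHslope : ∀ u v, u ≤ v → k * (c v - c u) ≤ H v - H u := fun u v huv =>
    hslope _ _ (hc_mem u) (hc_mem v) (hc_mono huv)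
  have hH_mono : Monotone H := by
    intro u v huv
    have h1 := hHslope u v huv
    nlinarith [mul_nonneg hk.le (sub_nonneg.mpr (hc_mono huv))]
  have hH_meas : Measurable H := hH_mono.measurable
  -- replace h by H in the RHS
  have hEq : EqOn (fun u => f * Real.cosh (h u) ^ 2) (fun u => f * Real.cosh (H u) ^ 2)
      (uIcc (-a) a) := by
    intro u hu
    rw [uIcc_of_le (by linarith : -a ≤ a)] at hu
    simp only [hH_def, hc_id u hu]
  rw [intervalIntegral.integral_congr hEq]
  -- bound for H on Icc
  set M : ℝ := max |H (-a)| |H a| with hM_def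
  have hM0 : 0 ≤ M := le_trans (abs_nonneg _) (le_max_left _ _)
  have hHbd : ∀ u ∈ Icc (-a) a, |H u| ≤ M := by
    intro u hu
    exact abs_le_max_abs_abs (hH_mono hu.1) (hH_mono hu.2)
  -- generic integrability helper
  have hInt : ∀ (g : ℝ → ℝ), Measurable g → ∀ C : ℝ, (∀ u ∈ Icc (-a) a, |g u| ≤ C) →
      ∀ p q, p ∈ Icc (-a) a → q ∈ Icc (-a) a → IntervalIntegrable g volume p q := by
    intro g hg C hC p q hp hq
    rw [intervalIntegrable_iff]
    apply Measure.integrableOn_of_bounded (M := C)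
    · rw [Set.uIoc, Real.volume_Ioc]
      exact ENNReal.ofReal_ne_top
    · exact hg.aestronglyMeasurable
    · filter_upwards [ae_restrict_mem measurableSet_uIoc] with u hu
      rw [Set.uIoc] at hu
      exact hC u ⟨(le_min hp.1 hq.1).trans hu.1.le, hu.2.trans (max_le hp.2 hq.2)⟩
  have hma : (-a : ℝ) ∈ Icc (-a) a := ⟨le_rfl, by linarith⟩
  have hpa : (a : ℝ) ∈ Icc (-a) a := ⟨by linarith, le_rfl⟩
  have h0a : (0 : ℝ) ∈ Icc (-a) a := ⟨by linarith, ha.le⟩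
  -- the three integrands
  set g1 : ℝ → ℝ := fun u => f * Real.cosh (H u) ^ 2 with hg1_def
  set g2 : ℝ → ℝ := fun u => f * Real.cosh (k * u) ^ 2 with hg2_def
  set g3 : ℝ → ℝ := fun u => f * (Real.sinh (2 * (k * u)) * (H u - k * u)) with hg3_def
  have hg3_meas : Measurable g3 := by
    apply measurable_const.mul
    exact ((Real.continuous_sinh.measurable.comp
      ((measurable_const.mul measurable_id).const_mul 2))).mul
      (hH_meas.sub (measurable_const.mul measurable_id))
  have hg3_bd : ∀ u ∈ Icc (-a) a, |g3 u| ≤ f * (Real.sinh (2 * (k * a)) * (M + k * a)) := by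
    intro u hu
    have hu' : |u| ≤ a := abs_le.mpr ⟨hu.1, hu.2⟩
    have hs : |Real.sinh (2 * (k * u))| ≤ Real.sinh (2 * (k * a)) := by
      rw [Real.abs_sinh]
      apply Real.sinh_le_sinh.mpr
      rw [abs_mul, abs_mul, abs_of_nonneg (by norm_num : (0:ℝ) ≤ 2), abs_of_nonneg hk.le]
      nlinarith
    have hH' := hHbd u hu
    have ht : |H u - k * u| ≤ M + k * a := by
      have h1 := abs_le.mp hH'
      have h2 := abs_le.mp hu'
      apply abs_le.mpr
      constructor <;> nlinarith
    rw [hg3_def]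
    simp only [abs_mul, abs_of_nonneg hf.le]
    apply mul_le_mul_of_nonneg_left _ hf.le
    exact mul_le_mul hs ht (abs_nonneg _) (Real.sinh_nonneg_iff.mpr (by positivity))
  have I3 : ∀ p q, p ∈ Icc (-a) a → q ∈ Icc (-a) a → IntervalIntegrable g3 volume p q :=
    hInt g3 hg3_meas _ hg3_bd
  have hg1_meas : Measurable g1 := by
    apply measurable_const.mul
    exact (Real.continuous_cosh.measurable.comp hH_meas).pow_const 2
  have hg1_bd : ∀ u ∈ Icc (-a) a, |g1 u| ≤ f * Real.cosh M ^ 2 := by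
    intro u hu
    have h1 : Real.cosh (H u) ≤ Real.cosh M := by
      apply Real.cosh_le_cosh.mpr
      rw [abs_of_nonneg hM0]
      exact hHbd u hu
    have h2 := Real.cosh_pos (x := H u)
    show |f * Real.cosh (H u) ^ 2| ≤ f * Real.cosh M ^ 2
    rw [abs_of_nonneg (by positivity)]
    have h3 : Real.cosh (H u) ^ 2 ≤ Real.cosh M ^ 2 := pow_le_pow_left₀ h2.le h1 2
    nlinarith
  have I1 : IntervalIntegrable g1 volume (-a) a := hInt g1 hg1_meas _ hg1_bd _ _ hma hpa
  have I2 : IntervalIntegrable g2 volume (-a) a := by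
    apply Continuous.intervalIntegrable
    exact continuous_const.mul ((Real.continuous_cosh.comp
      (continuous_const.mul continuous_id)).pow 2)
  -- pointwise tangent-line bound
  have key : ∀ u ∈ Icc (-a) a, g2 u + g3 u ≤ g1 u := by
    intro u hu
    have ht := cosh_tangent_line (2 * H u) (2 * (k * u))
    have e1 : Real.cosh (2 * H u) = 2 * Real.cosh (H u) ^ 2 - 1 := by
      rw [Real.cosh_two_mul, Real.cosh_sq]; ring
    have e2 : Real.cosh (2 * (k * u)) = 2 * Real.cosh (k * u) ^ 2 - 1 := by
      rw [Real.cosh_two_mul, Real.cosh_sq]; ring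
    rw [e1, e2] at ht
    simp only [hg1_def, hg2_def, hg3_def]
    nlinarith
  -- main comparison
  have step1 : (∫ u in (-a)..a, (g2 u + g3 u)) ≤ ∫ u in (-a)..a, g1 u :=
    intervalIntegral.integral_mono_on (by linarith) (I2.add (I3 _ _ hma hpa)) I1 key
  rw [intervalIntegral.integral_add I2 (I3 _ _ hma hpa)] at step1
  -- 0 ≤ ∫ g3
  have Ineg : IntervalIntegrable (fun u => g3 (-u)) volume 0 a := by
    apply hInt _ (hg3_meas.comp measurable_neg) (f * (Real.sinh (2 * (k * a)) * (M + k * a)))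
      _ 0 a h0a hpa
    intro u hu
    exact hg3_bd (-u) ⟨by linarith [hu.2], by linarith [hu.1]⟩
  have step2 : 0 ≤ ∫ u in (-a)..a, g3 u := by
    have split : (∫ u in (-a)..a, g3 u)
        = (∫ u in (-a)..(0:ℝ), g3 u) + ∫ u in (0:ℝ)..a, g3 u :=
      (intervalIntegral.integral_add_adjacent_intervals (I3 _ _ hma h0a) (I3 _ _ h0a hpa)).symm
    have negeq : (∫ u in (-a)..(0:ℝ), g3 u) = ∫ u in (0:ℝ)..a, g3 (-u) := by
      rw [intervalIntegral.integral_comp_neg]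
      norm_num
    rw [split, negeq, ← intervalIntegral.integral_add Ineg (I3 _ _ h0a hpa)]
    apply intervalIntegral.integral_nonneg ha.le
    intro u hu
    have hu1 : u ∈ Icc (-a) a := ⟨by linarith [hu.1], hu.2⟩
    have hu2 : -u ∈ Icc (-a) a := ⟨by linarith [hu.2], by linarith [hu.1]⟩
    have hsl := hHslope (-u) u (by linarith [hu.1])
    rw [hc_id u hu1, hc_id (-u) hu2] at hsl
    have hsn : 0 ≤ Real.sinh (2 * (k * u)) :=
      Real.sinh_nonneg_iff.mpr (by nlinarith [hu.1, hk])
    have hodd : Real.sinh (2 * (k * -u)) = - Real.sinh (2 * (k * u)) := by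
      rw [show 2 * (k * -u) = -(2 * (k * u)) by ring, Real.sinh_neg]
    show 0 ≤ f * (Real.sinh (2 * (k * -u)) * (H (-u) - k * -u))
      + f * (Real.sinh (2 * (k * u)) * (H u - k * u))
    rw [hodd]
    nlinarith [mul_nonneg (mul_nonneg hf.le hsn) (sub_nonneg.mpr hsl)]
  calc (∫ u in (-a)..a, g2 u) ≤ (∫ u in (-a)..a, g2 u) + ∫ u in (-a)..a, g3 u := by linarith
    _ ≤ ∫ u in (-a)..a, g1 u := step1
end

section
/- Let β > 0 satisfy tanh β = 1/β. Then for every f > 0 and a > 0, fa + (f²/4π)·sinh(4πa/f) ≥ (2πa²/β)·(1 + sinh(2β)/(2β)), i.e., the area of any symmetric catenoidal waist in the slab of height 2a is at least the area of the maximally stable waist (a/β)·C^β_{-β}. -/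
open Real

noncomputable def rho (t : ℝ) : ℝ := t * Real.cosh t - t - 2 * Real.sinh t

lemma rho_hasDeriv (t : ℝ) :
    HasDerivAt rho (t * Real.sinh t - Real.cosh t - 1) t := by
  have h := (((hasDerivAt_id t).mul (Real.hasDerivAt_cosh t)).sub (hasDerivAt_id t)).sub
      ((Real.hasDerivAt_sinh t).const_mul 2)
  refine h.congr_deriv ?_
  simp; ring

lemma rho'_hasDeriv (t : ℝ) :
    HasDerivAt (fun t => t * Real.sinh t - Real.cosh t - 1) (t * Real.cosh t) t := by
  have h := (((hasDerivAt_id t).mul (Real.hasDerivAt_sinh t)).sub (Real.hasDerivAt_cosh t)).sub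
      (hasDerivAt_const t (1:ℝ))
  refine h.congr_deriv ?_
  simp

lemma rho_strictConvex : StrictConvexOn ℝ (Set.Ici (0:ℝ)) rho := by
  apply strictConvexOn_of_deriv2_pos (convex_Ici 0)
  · exact fun x _ => (rho_hasDeriv x).continuousAt.continuousWithinAt
  · intro x hx
    rw [interior_Ici] at hx
    have h1 : deriv rho = fun t => t * Real.sinh t - Real.cosh t - 1 := by
      funext t; exact (rho_hasDeriv t).deriv
    have : deriv^[2] rho x = x * Real.cosh x := by
      simp only [Function.iterate_succ, Function.iterate_zero, Function.comp_apply, id_eq, h1]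
      exact (rho'_hasDeriv x).deriv
    rw [this]
    exact mul_pos hx (Real.cosh_pos x)

section
variable {β : ℝ} (hβ : 0 < β) (htanh : Real.tanh β = 1 / β)

include hβ htanh

lemma cosh_eq : Real.cosh β = β * Real.sinh β := by
  rw [Real.tanh_eq_sinh_div_cosh] at htanh
  have hc := Real.cosh_pos β
  field_simp at htanh
  nlinarith [hc]

lemma rho_two_beta : rho (2 * β) = 0 := by
  have hc := cosh_eq hβ htanh
  have hsq := Real.cosh_sq β
  unfold rho
  rw [Real.cosh_two_mul, Real.sinh_two_mul]
  nlinarith [Real.sinh_pos_iff.2 hβ]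

lemma rho'_two_beta : 0 < 2 * β * Real.sinh (2 * β) - Real.cosh (2 * β) - 1 := by
  have hc := cosh_eq hβ htanh
  have hsq := Real.cosh_sq β
  have hs := Real.sinh_pos_iff.2 hβ
  rw [Real.cosh_two_mul, Real.sinh_two_mul]
  have hs : 0 < Real.sinh β := Real.sinh_pos_iff.2 hβ
  nlinarith [Real.cosh_pos β, sq_nonneg (Real.cosh β)]

lemma rho_neg {t : ℝ} (h0 : 0 < t) (h2 : t < 2 * β) : rho t < 0 := by
  have h2β : (0:ℝ) < 2 * β := by linarith
  have ha' : (0:ℝ) < 1 - t / (2 * β) := by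
    rw [sub_pos, div_lt_one h2β]; exact h2
  have hb' : (0:ℝ) < t / (2 * β) := by positivity
  have hab : (1 - t / (2 * β)) + t / (2 * β) = 1 := by ring
  have key := rho_strictConvex.2 (Set.self_mem_Ici) (Set.mem_Ici.2 h2β.le)
    h2β.ne ha' hb' hab
  have : (1 - t / (2 * β)) • (0:ℝ) + (t / (2 * β)) • (2 * β) = t := by
    simp only [smul_eq_mul]
    field_simp
    ring
  rw [this] at key
  have h0' : rho 0 = 0 := by unfold rho; simp
  rw [h0', rho_two_beta hβ htanh] at key
  simpa using key

lemma rho_pos {t : ℝ} (h2 : 2 * β < t) : 0 < rho t := by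
  have h2β : (0:ℝ) < 2 * β := by linarith
  -- ρ' is strictly monotone on Ici 0
  have hmono : StrictMonoOn (fun t => t * Real.sinh t - Real.cosh t - 1) (Set.Ici (0:ℝ)) := by
    apply strictMonoOn_of_deriv_pos (convex_Ici 0)
    · exact fun x _ => (rho'_hasDeriv x).continuousAt.continuousWithinAt
    · intro x hx
      rw [interior_Ici] at hx
      rw [(rho'_hasDeriv x).deriv]
      exact mul_pos hx (Real.cosh_pos x)
  -- hence ρ' > 0 on [2β, ∞), so ρ strictly mono on Ici (2β)
  have hρmono : StrictMonoOn rho (Set.Ici (2 * β)) := by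
    apply strictMonoOn_of_deriv_pos (convex_Ici _)
    · exact fun x _ => (rho_hasDeriv x).continuousAt.continuousWithinAt
    · intro x hx
      rw [interior_Ici] at hx
      rw [(rho_hasDeriv x).deriv]
      have h1 := rho'_two_beta hβ htanh
      have hx' : 2 * β < x := hx
      have := hmono (Set.mem_Ici.2 h2β.le) (Set.mem_Ici.2 (by linarith : (0:ℝ) ≤ x)) hx'
      simp only at this
      linarith
  have := hρmono (Set.self_mem_Ici) (Set.mem_Ici.2 h2.le) h2
  rw [rho_two_beta hβ htanh] at this
  exact this

end

noncomputable def phi (t : ℝ) : ℝ := (t + Real.sinh t) / t ^ 2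

lemma phi_hasDeriv {x : ℝ} (hx : x ≠ 0) : HasDerivAt phi (rho x / x ^ 3) x := by
  have hu : HasDerivAt (fun t => t + Real.sinh t) (1 + Real.cosh x) x :=
    (hasDerivAt_id x).add (Real.hasDerivAt_sinh x)
  have hv : HasDerivAt (fun t : ℝ => t ^ 2) (2 * x) x := by
    simpa using hasDerivAt_pow 2 x
  have h := hu.div hv (by positivity)
  refine h.congr_deriv ?_
  unfold rho
  field_simp
  ring

variable {β : ℝ} (hβ : 0 < β) (htanh : Real.tanh β = 1 / β)

lemma phi_min (hβ : 0 < β) (htanh : Real.tanh β = 1 / β) {t : ℝ} (ht : 0 < t) :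
    phi (2 * β) ≤ phi t := by
  have h2β : (0:ℝ) < 2 * β := by linarith
  rcases le_or_gt t (2 * β) with h | h
  · -- φ strictly anti on Ioc 0 (2β)
    have hanti : StrictAntiOn phi (Set.Ioc 0 (2 * β)) := by
      apply strictAntiOn_of_deriv_neg (convex_Ioc _ _)
      · intro x hx
        exact (phi_hasDeriv (ne_of_gt hx.1)).continuousAt.continuousWithinAt
      · intro x hx
        rw [interior_Ioc] at hx
        rw [(phi_hasDeriv (ne_of_gt hx.1)).deriv]
        exact div_neg_of_neg_of_pos (rho_neg hβ htanh hx.1 hx.2) (pow_pos hx.1 3)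
    rcases eq_or_lt_of_le h with he | hlt
    · rw [he]
    · exact le_of_lt (hanti ⟨ht, h⟩ ⟨h2β, le_refl _⟩ hlt)
  · -- φ strictly mono on Ici (2β)
    have hmono : StrictMonoOn phi (Set.Ici (2 * β)) := by
      apply strictMonoOn_of_deriv_pos (convex_Ici _)
      · intro x hx
        have : (0:ℝ) < x := lt_of_lt_of_le h2β hx
        exact (phi_hasDeriv this.ne').continuousAt.continuousWithinAt
      · intro x hx
        rw [interior_Ici] at hx
        have hx0 : (0:ℝ) < x := lt_trans h2β hx
        rw [(phi_hasDeriv hx0.ne').deriv]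
        exact div_pos (rho_pos hβ htanh hx) (pow_pos hx0 3)
    exact le_of_lt (hmono (Set.self_mem_Ici) (Set.mem_Ici.2 h.le) h)

/-- If tanh β = 1/β with β > 0, then for all f > 0 and a > 0,
fa + (f²/4π)·sinh(4πa/f) ≥ (2πa²/β)(1 + sinh(2β)/(2β)): any symmetric
catenoidal waist in the slab has area at least that of the maximally stable waist. -/
theorem symmetric_waist_area_ge (β : ℝ) (hβ : 0 < β) (htanh : Real.tanh β = 1 / β)
    (f a : ℝ) (hf : 0 < f) (ha : 0 < a) :
    (2 * π * a ^ 2 / β) * (1 + Real.sinh (2 * β) / (2 * β))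
      ≤ f * a + (f ^ 2 / (4 * π)) * Real.sinh (4 * π * a / f) := by
  have hπ := Real.pi_pos
  have ht : (0:ℝ) < 4 * π * a / f := by positivity
  have h2β : (0:ℝ) < 2 * β := by linarith
  have key := phi_min hβ htanh ht
  unfold phi at key
  rw [div_le_div_iff₀ (by positivity) (by positivity)] at key
  have hc : (0:ℝ) ≤ f ^ 2 / (16 * π * β ^ 2) := by positivity
  have h := mul_le_mul_of_nonneg_right key hc
  calc (2 * π * a ^ 2 / β) * (1 + Real.sinh (2 * β) / (2 * β))
      = (2 * β + Real.sinh (2 * β)) * (4 * π * a / f) ^ 2 * (f ^ 2 / (16 * π * β ^ 2)) := by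
        field_simp
        ring
    _ ≤ (4 * π * a / f + Real.sinh (4 * π * a / f)) * (2 * β) ^ 2 * (f ^ 2 / (16 * π * β ^ 2)) := h
    _ = f * a + (f ^ 2 / (4 * π)) * Real.sinh (4 * π * a / f) := by
        field_simp
        ring
end
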